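/- Suppose ρ is a probability distribution stationary for W. Define c(u) := ∑_x ρ(x) V(x) (e^{uL} Q)(x). Then for every u ≥ 0 the function c is differentiable at u with some derivative c′(u), and ∑_x ρ(x) (L′ (e^{uL} Q))(x) = −a·c′(u) − b ∑_x ρ(x) (L V)(x) (e^{uL} Q)(x). (In the nonequilibrium stationary regime the response function reduces to R(t,s) = a ∂_s⟨V(x_s)Q(x_t)⟩_ρ − b⟨(LV)(x_s) Q(x_t)⟩_ρ.) -/

import Mathlib

/-- The generator matrix of the Markov jump process with rates `W`:
entry `W x y` at `(x, y)` for `x ≠ y` and `-∑_{y ≠ x} W x y` on the diagonal. -/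
noncomputable def genMatrix {K : Type*} [Fintype K] [DecidableEq K] (W : K → K → ℝ) :
    Matrix K K ℝ :=
  Matrix.of fun x y =>
    if x = y then -∑ z ∈ Finset.univ.filter (fun z => z ≠ x), W x z else W x y

/-- The semigroup `e^{tL}` (matrix exponential of `t • L`). -/
noncomputable def expL {K : Type*} [Fintype K] [DecidableEq K] (W : K → K → ℝ) (t : ℝ) :
    Matrix K K ℝ :=
  NormedSpace.exp (t • genMatrix W)

/-- Action of `e^{tL}` on observables: `(e^{tL} f)(x) = ∑ y, (e^{tL})_{x,y} f y`. -/
noncomputable def actE {K : Type*} [Fintype K] [DecidableEq K] (W : K → K → ℝ) (t : ℝ)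
    (f : K → ℝ) : K → ℝ :=
  fun x => ∑ y, expL W t x y * f y

/-- Action of `e^{tL}` on distributions: `(μ e^{tL})(x) = ∑ z, μ z (e^{tL})_{z,x}`. -/
noncomputable def muE {K : Type*} [Fintype K] [DecidableEq K] (W : K → K → ℝ) (μ : K → ℝ)
    (t : ℝ) : K → ℝ :=
  fun x => ∑ z, μ z * expL W t z x

/-- The backward generator acting on observables. -/
noncomputable def genL {K : Type*} [Fintype K] (W : K → K → ℝ) (f : K → ℝ) : K → ℝ :=
  fun x => ∑ y, W x y * (f y - f x)

/-- The linearized perturbation operator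
`(L' f)(x) = ∑ y, W x y * (b V y - a V x) * (f y - f x)`. -/
noncomputable def genL' {K : Type*} [Fintype K] (W : K → K → ℝ) (V : K → ℝ) (a b : ℝ)
    (f : K → ℝ) : K → ℝ :=
  fun x => ∑ y, W x y * (b * V y - a * V x) * (f y - f x)

/-- The perturbed rates `W_h x y = W x y * exp (h (b V y - a V x))`. -/
noncomputable def pertW {K : Type*} (W : K → K → ℝ) (V : K → ℝ) (a b h : ℝ) :
    K → K → ℝ :=
  fun x y => W x y * Real.exp (h * (b * V y - a * V x))

attribute [local instance] Matrix.linftyOpNormedRing Matrix.linftyOpNormedAlgebra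

lemma genMatrix_act {K : Type*} [Fintype K] [DecidableEq K] (W : K → K → ℝ) (f : K → ℝ)
    (x : K) : ∑ y, genMatrix W x y * f y = genL W f x := by
  classical
  rw [genL, ← Finset.add_sum_erase _ _ (Finset.mem_univ x),
      ← Finset.add_sum_erase _ (fun y => W x y * (f y - f x)) (Finset.mem_univ x)]
  have h1 : ∀ y ∈ Finset.univ.erase x, genMatrix W x y * f y = W x y * f y := by
    intro y hy
    simp [genMatrix, (Finset.ne_of_mem_erase hy).symm]
  rw [Finset.sum_congr rfl h1]
  have h2 : ∑ y ∈ Finset.univ.erase x, W x y * (f y - f x)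
      = ∑ y ∈ Finset.univ.erase x, W x y * f y
        - (∑ y ∈ Finset.univ.erase x, W x y) * f x := by
    rw [Finset.sum_mul, ← Finset.sum_sub_distrib]
    exact Finset.sum_congr rfl fun y _ => by ring
  rw [h2]
  have h3 : genMatrix W x x = -∑ y ∈ Finset.univ.erase x, W x y := by
    simp [genMatrix, Finset.filter_ne']
  rw [h3]
  ring

/-- stationary nonequilibrium response: if `ρ` is stationary for `W` and
`c u = ∑ x, ρ x * V x * (e^{uL} Q) x`, then for every `u ≥ 0` the derivative `c' u`
exists and `∑ x, ρ x * (L' (e^{uL} Q)) x = -a c'(u) - b ∑ x, ρ x * (LV) x * (e^{uL} Q) x`. -/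
theorem stationary_response_formula
    {K : Type*} [Fintype K] [Nonempty K] [DecidableEq K]
    (W : K → K → ℝ) (hW : ∀ x y : K, x ≠ y → 0 ≤ W x y)
    (ρ : K → ℝ) (hρ0 : ∀ x, 0 ≤ ρ x) (hρ1 : ∑ x, ρ x = 1)
    (hstat : ∀ f : K → ℝ, ∑ x, ρ x * genL W f x = 0)
    (V Q : K → ℝ) (a b : ℝ) (u : ℝ) (hu : 0 ≤ u) :
    ∃ c' : ℝ,
      HasDerivAt (fun v => ∑ x, ρ x * V x * actE W v Q x) c' u ∧
      ∑ x, ρ x * genL' W V a b (actE W u Q) x =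
        -a * c' - b * ∑ x, ρ x * genL W V x * actE W u Q x := by
  classical
  set L := genMatrix W with hL
  set g : K → ℝ := actE W u Q with hgdef
  -- the linear functional M ↦ ∑ x, ρ x * V x * ∑ y, M x y * Q y
  let φ : Matrix K K ℝ →ₗ[ℝ] ℝ :=
    { toFun := fun M => ∑ x, ρ x * V x * ∑ y, M x y * Q y
      map_add' := by
        intro M N
        simp [Matrix.add_apply, add_mul, Finset.sum_add_distrib, mul_add]
      map_smul' := by
        intro c M
        simp only [Matrix.smul_apply, smul_eq_mul, RingHom.id_apply, Finset.mul_sum]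
        refine Finset.sum_congr rfl fun x _ => ?_
        exact Finset.sum_congr rfl fun y _ => by ring }
  let ψ : Matrix K K ℝ →L[ℝ] ℝ := LinearMap.toContinuousLinearMap φ
  have hexp : HasDerivAt (fun v : ℝ => NormedSpace.exp (v • L))
      (L * NormedSpace.exp (u • L)) u := hasDerivAt_exp_smul_const' L u
  have hd : HasDerivAt (fun v => ψ (NormedSpace.exp (v • L)))
      (ψ (L * NormedSpace.exp (u • L))) u :=
    ψ.hasFDerivAt.comp_hasDerivAt u hexp
  have hψval : ψ (L * NormedSpace.exp (u • L)) = ∑ x, ρ x * V x * genL W g x := by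
    show ∑ x, ρ x * V x * ∑ y, (L * NormedSpace.exp (u • L)) x y * Q y = _
    refine Finset.sum_congr rfl fun x _ => ?_
    congr 1
    have : ∑ y, (L * NormedSpace.exp (u • L)) x y * Q y
        = ∑ z, L x z * g z := by
      simp only [Matrix.mul_apply, Finset.sum_mul]
      rw [Finset.sum_comm]
      refine Finset.sum_congr rfl fun z _ => ?_
      rw [hgdef]
      simp only [actE, expL, Finset.mul_sum]
      exact Finset.sum_congr rfl fun y _ => by ring
    rw [this]
    exact genMatrix_act W g x
  have hfun : (fun v => ψ (NormedSpace.exp (v • L)))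
      = (fun v => ∑ x, ρ x * V x * actE W v Q x) := by
    funext v
    rfl
  refine ⟨∑ x, ρ x * V x * genL W g x, ?_, ?_⟩
  · rw [← hfun]
    rw [← hψval]
    exact hd
  · -- pointwise algebraic identity
    have key : ∀ x, genL' W V a b g x + a * (V x * genL W g x) + b * (genL W V x * g x)
        = b * genL W (fun z => V z * g z) x := by
      intro x
      simp only [genL, genL', Finset.mul_sum, Finset.sum_mul, ← Finset.sum_add_distrib]
      exact Finset.sum_congr rfl fun y _ => by ring
    have hsum : ∑ x, ρ x * genL' W V a b g x
        + a * ∑ x, ρ x * V x * genL W g x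
        + b * ∑ x, ρ x * genL W V x * g x
        = b * ∑ x, ρ x * genL W (fun z => V z * g z) x := by
      rw [Finset.mul_sum, Finset.mul_sum, Finset.mul_sum, ← Finset.sum_add_distrib,
        ← Finset.sum_add_distrib]
      refine Finset.sum_congr rfl fun x _ => ?_
      linear_combination ρ x * key x
    rw [hstat (fun z => V z * g z), mul_zero] at hsum
    linarith [hsum]
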